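/- Let V = {1,…,n} and let λ = (λ_1,…,λ_k) be an integer sequence with 0 < λ_1 < ⋯ < λ_k ≤ n. If λ_{i+1} − λ_i ≤ λ_1 for all i = 1,…,k−1 and λ_1 + λ_k = n, then the symmetric hypergraph 𝓗(λ) is minimal transversal-free. -/

import Mathlib

open Finset

/-- An `H`-move in hypergraph NIM: strictly decrease every pile in `H`, keep others. -/
def HMove {n : ℕ} (H : Finset (Fin n)) (x x' : Fin n → ℕ) : Prop :=
  (∀ i ∈ H, x' i < x i) ∧ ∀ i ∉ H, x' i = x i

/-- A move in `NIM_𝓗`: an `H`-move for some hyperedge `H ∈ 𝓗`. -/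
def Move {n : ℕ} (F : Set (Finset (Fin n))) (x x' : Fin n → ℕ) : Prop :=
  ∃ H ∈ F, HMove H x x'

/-- Minimal excludant of a set of naturals. -/
noncomputable def mex (S : Set ℕ) : ℕ := sInf {g : ℕ | g ∉ S}

/-- The Sprague–Grundy function of `NIM_𝓗`, defined by well-founded recursion.
(The guard `∑ x' < ∑ x` is automatic whenever `∅ ∉ 𝓗`.) -/
noncomputable def grundy {n : ℕ} (F : Set (Finset (Fin n))) (x : Fin n → ℕ) : ℕ :=
  mex {g : ℕ | ∃ x', ∃ _h : Move F x x' ∧ (∑ i, x' i) < ∑ i, x i, grundy F x' = g}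
termination_by ∑ i, x i
decreasing_by exact _h.2

/-- `N` consecutive moves are possible from `x`: there are hyperedges `H¹,…,H^N ∈ 𝓗`
whose partial sums of characteristic vectors stay `≤ x`. -/
def TetrisReach {n : ℕ} (F : Set (Finset (Fin n))) (x : Fin n → ℕ) (N : ℕ) : Prop :=
  ∃ f : ℕ → Finset (Fin n), (∀ j < N, f j ∈ F) ∧
    ∀ j < N, ∀ i, (∑ l ∈ Finset.range (j + 1), if i ∈ f l then 1 else 0) ≤ x i

/-- The Tetris function: the largest `N` with `TetrisReach`. -/
noncomputable def tetris {n : ℕ} (F : Set (Finset (Fin n))) (x : Fin n → ℕ) : ℕ :=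
  sSup {N | TetrisReach F x N}

/-- `m(x)`: the minimum pile size. -/
noncomputable def mval {n : ℕ} (x : Fin n → ℕ) : ℕ := sInf (Set.range x)

/-- `y_𝓗(x) = 𝒯_𝓗(x − m(x)e) + 1`. -/
noncomputable def yval {n : ℕ} (F : Set (Finset (Fin n))) (x : Fin n → ℕ) : ℕ :=
  tetris F (fun i => x i - mval x) + 1

/-- `v_𝓗(x)`. -/
noncomputable def vval {n : ℕ} (F : Set (Finset (Fin n))) (x : Fin n → ℕ) : ℕ :=
  Nat.choose (yval F x) 2 + ((mval x - Nat.choose (yval F x) 2 - 1) % yval F x)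

/-- A position is long if `m(x) ≤ C(y_𝓗(x), 2)`. -/
noncomputable def IsLong {n : ℕ} (F : Set (Finset (Fin n))) (x : Fin n → ℕ) : Prop :=
  mval x ≤ Nat.choose (yval F x) 2

/-- The Jenkyns–Mayberry function `𝒰_𝓗`. -/
noncomputable def jmU {n : ℕ} (F : Set (Finset (Fin n))) (x : Fin n → ℕ) : ℕ :=
  if mval x ≤ Nat.choose (yval F x) 2 then tetris F x else vval F x

/-- `𝓗` is a JM hypergraph if its SG function is given by the JM formula. -/
def IsJM {n : ℕ} (F : Set (Finset (Fin n))) : Prop :=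
  ∀ x : Fin n → ℕ, grundy F x = jmU F x

/-- `T` is a transversal of `𝓗` if it meets every hyperedge. -/
def IsTransversal {n : ℕ} (F : Set (Finset (Fin n))) (T : Finset (Fin n)) : Prop :=
  ∀ H ∈ F, (T ∩ H).Nonempty

/-- `𝓗` is transversal-free if no hyperedge is a transversal. -/
def TransversalFree {n : ℕ} (F : Set (Finset (Fin n))) : Prop :=
  ∀ H ∈ F, ¬ IsTransversal F H

/-- The induced subhypergraph `𝓗_S`. -/
def inducedH {n : ℕ} (F : Set (Finset (Fin n))) (S : Finset (Fin n)) : Set (Finset (Fin n)) :=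
  {H | H ∈ F ∧ H ⊆ S}

/-- `𝓗` is minimal transversal-free. -/
def MinTransversalFree {n : ℕ} (F : Set (Finset (Fin n))) : Prop :=
  TransversalFree F ∧
    ∀ S : Finset (Fin n), S ⊂ Finset.univ → (inducedH F S).Nonempty →
      ¬ TransversalFree (inducedH F S)

/-- The symmetric hypergraph `𝓗(λ)` of a spectrum `λ₁ < ⋯ < λ_k` (1-indexed). -/
def Hlambda {n : ℕ} (k : ℕ) (gl : ℕ → ℕ) : Set (Finset (Fin n)) :=
  {H | ∃ j, 1 ≤ j ∧ j ≤ k ∧ H.card = gl j}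

/-- If `λ_{i+1} − λ_i ≤ λ_1` for all `i` and `λ_1 + λ_k = n`, then `𝓗(λ)` is
minimal transversal-free. -/
theorem Hlambda_minTransversalFree_of_conditions
    (n k : ℕ) (gl : ℕ → ℕ) (hk : 1 ≤ k) (hpos : 0 < gl 1)
    (hmono : ∀ i, 1 ≤ i → i < k → gl i < gl (i + 1)) (hle : gl k ≤ n)
    (hgap : ∀ i, 1 ≤ i → i < k → gl (i + 1) - gl i ≤ gl 1)
    (hsum : gl 1 + gl k = n) :
    MinTransversalFree (Hlambda (n := n) k gl) := by
  have key : ∀ i j, 1 ≤ i → i ≤ j → j ≤ k → gl i ≤ gl j := by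
    intro i j h1
    induction j with
    | zero => intro hij _; omega
    | succ j ih =>
      intro hij hjk
      rcases Nat.lt_or_ge i (j + 1) with h | h
      · have h2 : gl i ≤ gl j := ih (by omega) (by omega)
        have h3 := hmono j (by omega) (by omega)
        omega
      · have : i = j + 1 := by omega
        rw [this]
  constructor
  · rintro H ⟨j, hj1, hjk, hcard⟩ htr
    have hjle : gl j ≤ gl k := key j k hj1 hjk le_rfl
    have h1 : gl 1 ≤ Hᶜ.card := by
      rw [Finset.card_compl, hcard, Fintype.card_fin]
      omega
    obtain ⟨H', hH'sub, hH'card⟩ := Finset.exists_subset_card_eq (s := Hᶜ) (n := gl 1) h1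
    obtain ⟨x, hx⟩ := htr H' ⟨1, le_rfl, hk, hH'card⟩
    rw [Finset.mem_inter] at hx
    exact (Finset.mem_compl.mp (hH'sub hx.2)) hx.1
  · rintro S hSsub ⟨H0, ⟨j0, hj01, hj0k, hc0⟩, hsubS⟩
    have hs : S.card < n := by
      have := Finset.card_lt_card hSsub
      simpa using this
    have h1s : gl 1 ≤ S.card := by
      have := Finset.card_le_card hsubS
      have := key 1 j0 le_rfl hj01 hj0k
      omega
    set jst := Nat.findGreatest (fun j => gl j ≤ S.card) k with hjstdef
    have hjst1 : 1 ≤ jst := Nat.le_findGreatest hk h1s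
    have hjstk : jst ≤ k := Nat.findGreatest_le k
    have hP : gl jst ≤ S.card :=
      Nat.findGreatest_spec (P := fun j => gl j ≤ S.card) hk h1s
    obtain ⟨H, hHsub, hHcard⟩ := Finset.exists_subset_card_eq (s := S) (n := gl jst) hP
    intro htf
    refine htf H ⟨⟨jst, hjst1, hjstk, hHcard⟩, hHsub⟩ ?_
    rintro H' ⟨⟨j, hj1, hjk, hc⟩, hH'S⟩
    have hjle : gl j ≤ S.card := by
      have := Finset.card_le_card hH'S
      omega
    have hjjst : j ≤ jst := by
      by_contra hlt
      exact Nat.findGreatest_is_greatest (P := fun j => gl j ≤ S.card) (by omega) hjk hjle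
    have hglj : gl j ≤ gl jst := key j jst hj1 hjjst hjstk
    have hg1j : gl 1 ≤ gl j := key 1 j le_rfl hj1 hjk
    by_contra hne
    rw [Finset.not_nonempty_iff_eq_empty] at hne
    have hdisj : Disjoint H H' := Finset.disjoint_iff_inter_eq_empty.mpr hne
    have hcup : H.card + H'.card ≤ S.card := by
      rw [← Finset.card_union_of_disjoint hdisj]
      exact Finset.card_le_card (Finset.union_subset hHsub hH'S)
    rw [hHcard, hc] at hcup
    rcases Nat.lt_or_ge jst k with hlt | hge
    · have h1 := hmono jst hjst1 hlt
      have h2 := hgap jst hjst1 hlt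
      have h3 : ¬ gl (jst + 1) ≤ S.card :=
        Nat.findGreatest_is_greatest (P := fun j => gl j ≤ S.card) (n := k) (by omega) (by omega)
      omega
    · have hjk2 : jst = k := by omega
      have : gl jst = gl k := by rw [hjk2]
      omega
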